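/- Assume Hypothesis 1 (with the Camina–Zieschang data from the context). Then the inner structure D₀ is a 2-(v₀,k₀,λ₀) design with λ₀ = λ/μ; in particular the alternative that D₀ is a symmetric 1-design with k₀ = v₀−1 does not occur. -/
import Mathlib


open Finset

namespace FlagTransitivePaper

/-- A nontrivial 2-design `D` (point set `P`, blocks indexed by `ι`, the block `i`
having point set `blk i`) with parameters `(v, k, λ)`, replication number `r` and `b`
blocks, together with a group `G` acting on points and blocks as a flag-transitive
automorphism group of `D`, preserving a nontrivial partition `Σ` of `P` into `v₁`
classes of size `v₀`; the partition is encoded by the class map `proj : P → Q`, where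
`Q` is the set of classes.  The structure also records the Camina–Zieschang data:
the constant `k₀` (every block meets every class in `0` or `k₀` points), `k₁ = k/k₀`
(the constant number of classes met by a block, i.e. the size of the trace of a
block on `Σ`), the constant `μ` (the number of blocks inducing a given nonempty
trace on a given class) and the constant `η` (the number of blocks having a given
trace on `Σ`), as well as the parameters `λ₁` and `r₁` of the quotient structure
`D₁` (these are constrained only via `Hyp32`, i.e. when `D₁` is a 2-design). -/
structure Setting (P ι Q G : Type*) [Fintype P] [DecidableEq P] [Fintype ι]
    [Fintype Q] [DecidableEq Q] [Group G] [MulAction G P] [MulAction G ι]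
    [MulAction G Q] where
  /-- the set of points of a block -/
  blk : ι → Finset P
  /-- the map sending a point to its class in the partition `Σ` -/
  proj : P → Q
  v : ℕ
  k : ℕ
  lam : ℕ
  r : ℕ
  b : ℕ
  v₀ : ℕ
  v₁ : ℕ
  k₀ : ℕ
  k₁ : ℕ
  μ : ℕ
  η : ℕ
  lam₁ : ℕ
  r₁ : ℕ
  card_points : Fintype.card P = v
  card_blocks : Fintype.card ι = b
  two_lt_k : 2 < k
  k_lt_v : k < v
  blk_card : ∀ i : ι, (blk i).card = k
  pair_count : ∀ x y : P, x ≠ y →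
    (univ.filter fun i : ι => x ∈ blk i ∧ y ∈ blk i).card = lam
  rep_count : ∀ x : P, (univ.filter fun i : ι => x ∈ blk i).card = r
  smul_blk : ∀ (g : G) (i : ι), blk (g • i) = (blk i).image fun x => g • x
  flag_trans : ∀ (x : P) (i : ι), x ∈ blk i → ∀ (y : P) (j : ι), y ∈ blk j →
    ∃ g : G, g • x = y ∧ g • i = j
  proj_equivariant : ∀ (g : G) (x : P), proj (g • x) = g • proj x
  fiber_card : ∀ q : Q, (univ.filter fun x : P => proj x = q).card = v₀
  card_classes : Fintype.card Q = v₁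
  one_lt_v₀ : 1 < v₀
  one_lt_v₁ : 1 < v₁
  two_le_k₀ : 2 ≤ k₀
  k₀_mul_k₁ : k₀ * k₁ = k
  blk_fiber_card : ∀ (i : ι) (q : Q),
    ((blk i).filter fun x => proj x = q).card = 0 ∨
      ((blk i).filter fun x => proj x = q).card = k₀
  trace_card : ∀ i : ι,
    (univ.filter fun q : Q => ((blk i).filter fun x => proj x = q).Nonempty).card = k₁
  mu_count : ∀ (i : ι) (q : Q), ((blk i).filter fun x => proj x = q).Nonempty →
    (univ.filter fun j : ι =>
      (blk j).filter (fun x => proj x = q) = (blk i).filter fun x => proj x = q).card = μ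
  eta_count : ∀ i : ι,
    (univ.filter fun j : ι =>
      (univ.filter fun q : Q => ((blk j).filter fun x => proj x = q).Nonempty) =
        univ.filter fun q : Q => ((blk i).filter fun x => proj x = q).Nonempty).card = η

variable {P ι Q G : Type*} [Fintype P] [DecidableEq P] [Fintype ι] [Fintype Q]
  [DecidableEq Q] [Group G] [MulAction G P] [MulAction G ι] [MulAction G Q]

namespace Setting

variable (S : Setting P ι Q G)

/-- The trace of the block `i` on the class `q`, i.e. `B ∩ Δ`. -/
def fiberTrace (i : ι) (q : Q) : Finset P := (S.blk i).filter fun x => S.proj x = q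

/-- The trace of the block `i` on `Σ`: the set of classes met by the block. -/
def trace (i : ι) : Finset Q := univ.filter fun q : Q => (S.fiberTrace i q).Nonempty

/-- `A = gcd (k₁ − 1, v₁ − 1)`. -/
def A : ℕ := Nat.gcd (S.k₁ - 1) (S.v₁ - 1)

/-- `η₀ = gcd (η, v₀ / k₀)`. -/
def η₀ : ℕ := Nat.gcd S.η (S.v₀ / S.k₀)

/-- `η₁ = η / η₀`. -/
def η₁ : ℕ := S.η / S.η₀

/-- `r₁' = (v₀ / (k₀ η₀)) · ((v₀ − 1)/(k₀ − 1))`. -/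
def r₁' : ℕ := S.v₀ / (S.k₀ * S.η₀) * ((S.v₀ - 1) / (S.k₀ - 1))

/-- **Hypothesis 1**: `λ` is a prime dividing `r`, `v ≤ 2λ²(λ−1)`, and the
partition `Σ` is minimal (w.r.t. refinement) among the nontrivial `G`-invariant
partitions of the point set. -/
def Hyp1 : Prop :=
  S.lam.Prime ∧ S.lam ∣ S.r ∧ S.v ≤ 2 * S.lam ^ 2 * (S.lam - 1) ∧
    ∀ s : Setoid P,
      (∀ (g : G) (x y : P), s.r x y → s.r (g • x) (g • y)) →
      (∀ x y : P, s.r x y → S.proj x = S.proj y) →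
      (∃ x y : P, x ≠ y ∧ s.r x y) →
      ∀ x y : P, s.r x y ↔ S.proj x = S.proj y

/-- The quotient structure `D₁` is a 2-design with parameters `(v₁, k₁, λ₁)`,
where `λ₁ = v₀²λ/(k₀²η)`, with replication number `r₁ = (v₁−1)λ₁/(k₁−1)`:
any two distinct classes are met simultaneously by exactly `λ₁ · η` blocks. -/
def QuotientTwoDesign : Prop :=
  (∀ q q' : Q, q ≠ q' →
    (univ.filter fun i : ι => q ∈ S.trace i ∧ q' ∈ S.trace i).card = S.lam₁ * S.η) ∧
  S.lam₁ * (S.k₀ ^ 2 * S.η) = S.v₀ ^ 2 * S.lam ∧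
  S.r₁ * (S.k₁ - 1) = S.lam₁ * (S.v₁ - 1)

/-- The quotient structure `D₁` is a symmetric 1-design with `k₁ = v₁ − 1`
(in particular it has exactly `v₁` distinct blocks, namely the distinct traces). -/
def QuotientSymm1Design : Prop :=
  S.k₁ = S.v₁ - 1 ∧ (univ.image fun i : ι => S.trace i).card = S.v₁

/-- **Hypothesis 3/2**: Hypothesis 1 holds and `D₁` is a 2-`(v₁, k₁, λ₁)` design,
not a symmetric 1-design with `k₁ = v₁ − 1`. -/
def Hyp32 : Prop := S.Hyp1 ∧ S.QuotientTwoDesign ∧ ¬ S.QuotientSymm1Design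

/-- **Hypothesis 2**: Hypothesis 3/2 holds, `r > k` and `λ > 3`. -/
def Hyp2 : Prop := S.Hyp32 ∧ S.k < S.r ∧ 3 < S.lam

/-- `D₁` is of type I: `k₁ = (k₁, v₁) · (k₁, r/λ) · λ`. -/
def TypeI : Prop := S.k₁ = Nat.gcd S.k₁ S.v₁ * Nat.gcd S.k₁ (S.r / S.lam) * S.lam

/-- `D₁` is of type II: `k₁ = (k₁, v₁) · (k₁, r/λ)`. -/
def TypeII : Prop := S.k₁ = Nat.gcd S.k₁ S.v₁ * Nat.gcd S.k₁ (S.r / S.lam)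

/-- `D₁` is of type Ia: type I, and `λ` divides none of `v₀(v₀−1)`, `v₁(v₁−1)`,
`v(v−1)`. -/
def TypeIa : Prop :=
  S.TypeI ∧ ¬ S.lam ∣ S.v₀ * (S.v₀ - 1) ∧ ¬ S.lam ∣ S.v₁ * (S.v₁ - 1) ∧
    ¬ S.lam ∣ S.v * (S.v - 1)

/-- `D₁` is of type Ic: type I, and
`(v₀, k₀, v₁, k₁) = ((λ²+λ+2)/2, 2, (λ−1)(λ²−2)/2, λ²(λ−1)/4)`. -/
def TypeIc : Prop :=
  S.TypeI ∧ S.k₀ = 2 ∧ 2 * S.v₀ = S.lam ^ 2 + S.lam + 2 ∧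
    2 * S.v₁ = (S.lam - 1) * (S.lam ^ 2 - 2) ∧ 4 * S.k₁ = S.lam ^ 2 * (S.lam - 1)

/-- `D₁` is of type IIb: type II and `λ > v₀`. -/
def TypeIIb : Prop := S.TypeII ∧ S.v₀ < S.lam

/-- The permutation of the class `Δ = {x : P // proj x = q}` induced by an element
of the (setwise) stabiliser `G_Δ` of the class. -/
def classPerm (q : Q) (g : MulAction.stabilizer G q) :
    Equiv.Perm {x : P // S.proj x = q} where
  toFun x := ⟨(g : G) • (x : P), by
    rw [S.proj_equivariant, x.2]
    exact MulAction.mem_stabilizer_iff.mp g.2⟩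
  invFun x := ⟨(g : G)⁻¹ • (x : P), by
    rw [S.proj_equivariant, x.2, inv_smul_eq_iff]
    exact (MulAction.mem_stabilizer_iff.mp g.2).symm⟩
  left_inv x := Subtype.ext (inv_smul_smul _ _)
  right_inv x := Subtype.ext (smul_inv_smul _ _)

/-- The natural homomorphism from the stabiliser `G_Δ` of a class `Δ` of `Σ` to the
symmetric group on `Δ`; its range is the induced group `G_Δ^Δ`. -/
def classHom (q : Q) :
    MulAction.stabilizer G q →* Equiv.Perm {x : P // S.proj x = q} where
  toFun := S.classPerm q
  map_one' := by
    apply Equiv.ext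
    intro x
    apply Subtype.ext
    show ((1 : MulAction.stabilizer G q) : G) • (x : P) = (x : P)
    simp
  map_mul' g h := by
    apply Equiv.ext
    intro x
    apply Subtype.ext
    show ((g * h : MulAction.stabilizer G q) : G) • (x : P) =
      (g : G) • ((h : G) • (x : P))
    simp [mul_smul]

end Setting

namespace Setting

variable (S : Setting P ι Q G)

lemma double_count (x : P) (W : Finset P) (hx : x ∉ W) :
    W.card * S.lam = ∑ i ∈ univ.filter (fun i => x ∈ S.blk i), (S.blk i ∩ W).card := by
  have h1 : ∀ y ∈ W, (univ.filter fun i : ι => x ∈ S.blk i ∧ y ∈ S.blk i).card = S.lam :=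
    fun y hy => S.pair_count x y (fun h => hx (h ▸ hy))
  calc W.card * S.lam
      = ∑ y ∈ W, (univ.filter fun i : ι => x ∈ S.blk i ∧ y ∈ S.blk i).card := by
        rw [Finset.sum_congr rfl h1, Finset.sum_const, smul_eq_mul]
    _ = ∑ y ∈ W, ∑ i : ι, if x ∈ S.blk i ∧ y ∈ S.blk i then 1 else 0 :=
        Finset.sum_congr rfl fun y _ => Finset.card_filter _ _
    _ = ∑ i : ι, ∑ y ∈ W, if x ∈ S.blk i ∧ y ∈ S.blk i then 1 else 0 := Finset.sum_comm
    _ = ∑ i : ι, if x ∈ S.blk i then (S.blk i ∩ W).card else 0 := by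
        refine Finset.sum_congr rfl fun i _ => ?_
        by_cases hxi : x ∈ S.blk i
        · simp only [hxi, true_and, if_true]
          rw [Finset.inter_comm, ← Finset.filter_mem_eq_inter, Finset.card_filter]
        · simp [hxi]
    _ = _ := (Finset.sum_filter _ _).symm

lemma fiberTrace_card (i : ι) (x : P) (hxi : x ∈ S.blk i) :
    (S.fiberTrace i (S.proj x)).card = S.k₀ := by
  have hmem : x ∈ S.fiberTrace i (S.proj x) := by
    simp [Setting.fiberTrace, hxi]
  rcases S.blk_fiber_card i (S.proj x) with h | h
  · exact absurd (Finset.card_pos.mpr ⟨x, hmem⟩) (by rw [Setting.fiberTrace] at *; omega)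
  · exact h

/-- `λ (v₀ - 1) = r (k₀ - 1)`. -/
lemma inner_relation (x : P) :
    (S.v₀ - 1) * S.lam = S.r * (S.k₀ - 1) := by
  set q := S.proj x with hq
  set W : Finset P := (univ.filter fun z => S.proj z = q).erase x with hW
  have hxW : x ∉ W := Finset.notMem_erase _ _
  have hWcard : W.card = S.v₀ - 1 := by
    rw [hW, Finset.card_erase_of_mem (by simp [hq]), S.fiber_card]
  have h := S.double_count x W hxW
  rw [hWcard] at h
  rw [h]
  have hterm : ∀ i ∈ univ.filter (fun i => x ∈ S.blk i),
      (S.blk i ∩ W).card = S.k₀ - 1 := by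
    intro i hi
    rw [Finset.mem_filter] at hi
    have hset : S.blk i ∩ W = (S.fiberTrace i q).erase x := by
      ext z
      simp only [Setting.fiberTrace, Finset.mem_inter, Finset.mem_erase, Finset.mem_filter,
        Finset.mem_univ, true_and, hW]
      tauto
    rw [hset, Finset.card_erase_of_mem (by simp [Setting.fiberTrace, hi.2, hq]),
      hq, S.fiberTrace_card i x hi.2]
  rw [Finset.sum_congr rfl hterm, Finset.sum_const, smul_eq_mul, S.rep_count]

/-- `λ (v - 1) = r (k - 1)`. -/
lemma global_relation (x : P) :
    (S.v - 1) * S.lam = S.r * (S.k - 1) := by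
  set W : Finset P := univ.erase x with hW
  have h := S.double_count x W (Finset.notMem_erase _ _)
  have hWcard : W.card = S.v - 1 := by
    rw [hW, Finset.card_erase_of_mem (Finset.mem_univ _), Finset.card_univ, S.card_points]
  rw [hWcard] at h
  rw [h]
  have hterm : ∀ i ∈ univ.filter (fun i => x ∈ S.blk i),
      (S.blk i ∩ W).card = S.k - 1 := by
    intro i hi
    rw [Finset.mem_filter] at hi
    have hset : S.blk i ∩ W = (S.blk i).erase x := by
      ext z; simp [hW, and_comm]
    rw [hset, Finset.card_erase_of_mem hi.2, S.blk_card]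
  rw [Finset.sum_congr rfl hterm, Finset.sum_const, smul_eq_mul, S.rep_count]

/-- `b k = v r`. -/
lemma flag_count : S.b * S.k = S.v * S.r := by
  have h1 : ∑ i : ι, (S.blk i).card = S.b * S.k := by
    have : ∀ i : ι, (S.blk i).card = S.k := S.blk_card
    rw [Finset.sum_congr rfl fun i _ => this i, Finset.sum_const, smul_eq_mul,
      Finset.card_univ, S.card_blocks]
  have h2 : ∑ i : ι, (S.blk i).card = S.v * S.r := by
    calc ∑ i : ι, (S.blk i).card
        = ∑ i : ι, ∑ x : P, if x ∈ S.blk i then 1 else 0 := by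
          refine Finset.sum_congr rfl fun i _ => ?_
          rw [← Finset.card_filter]
          congr 1
          ext z; simp
      _ = ∑ x : P, ∑ i : ι, if x ∈ S.blk i then 1 else 0 := Finset.sum_comm
      _ = ∑ x : P, S.r := by
          refine Finset.sum_congr rfl fun x _ => ?_
          rw [← Finset.card_filter, S.rep_count]
      _ = S.v * S.r := by
          rw [Finset.sum_const, smul_eq_mul, Finset.card_univ, S.card_points]
  omega

/-- `v = v₀ v₁`. -/
lemma point_count : S.v = S.v₀ * S.v₁ := by
  have : Fintype.card P = ∑ q : Q, (univ.filter fun x : P => S.proj x = q).card :=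
    Finset.card_eq_sum_card_fiberwise (fun x _ => Finset.mem_univ (S.proj x))
  rw [Finset.sum_congr rfl fun q _ => S.fiber_card q, Finset.sum_const, smul_eq_mul,
    Finset.card_univ, S.card_classes, S.card_points] at this
  rw [this, Nat.mul_comm]

/-- The key counting lemma: `λ = (#traces through a pair) · μ`. -/
lemma key_count (hlam : 0 < S.lam) (q : Q) (x y : P) (hx : S.proj x = q)
    (hy : S.proj y = q) (hxy : x ≠ y) :
    S.lam = ((univ.filter fun i : ι => x ∈ S.blk i ∧ y ∈ S.blk i).image
      fun i => S.fiberTrace i q).card * S.μ ∧ 0 < S.μ := by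
  set F : Finset ι := univ.filter fun i : ι => x ∈ S.blk i ∧ y ∈ S.blk i with hF
  have hFcard : F.card = S.lam := S.pair_count x y hxy
  have hfib : ∀ t ∈ F.image fun i => S.fiberTrace i q,
      (F.filter fun i => S.fiberTrace i q = t).card = S.μ := by
    intro t ht
    rw [Finset.mem_image] at ht
    obtain ⟨i₀, hi₀F, hi₀⟩ := ht
    rw [Finset.mem_filter] at hi₀F
    have hxi₀ : x ∈ S.fiberTrace i₀ q := by
      simp [Setting.fiberTrace, hi₀F.2.1, hx]
    have hyi₀ : y ∈ S.fiberTrace i₀ q := by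
      simp [Setting.fiberTrace, hi₀F.2.2, hy]
    have hset : (F.filter fun i => S.fiberTrace i q = t) =
        univ.filter fun j : ι => ((S.blk j).filter fun z => S.proj z = q)
          = ((S.blk i₀).filter fun z => S.proj z = q) := by
      ext j
      simp only [hF, Setting.fiberTrace, Finset.mem_filter, Finset.mem_univ, true_and, ← hi₀]
      constructor
      · rintro ⟨_, hj⟩; exact hj
      · intro hj
        refine ⟨⟨?_, ?_⟩, hj⟩
        · have : x ∈ S.fiberTrace j q := by rw [Setting.fiberTrace, hj]; exact hxi₀
          exact (Finset.mem_filter.mp this).1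
        · have : y ∈ S.fiberTrace j q := by rw [Setting.fiberTrace, hj]; exact hyi₀
          exact (Finset.mem_filter.mp this).1
    rw [hset, S.mu_count i₀ q ⟨x, hxi₀⟩]
  have hmain : S.lam = ((F.image fun i => S.fiberTrace i q).card) * S.μ := by
    rw [← hFcard, Finset.card_eq_sum_card_image (fun i => S.fiberTrace i q) F]
    rw [Finset.sum_congr rfl hfib, Finset.sum_const, smul_eq_mul]
  refine ⟨hmain, ?_⟩
  have hFne : F.Nonempty := Finset.card_pos.mp (by omega)
  obtain ⟨i₀, hi₀⟩ := hFne
  have hxi₀ : x ∈ S.fiberTrace i₀ q := by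
    rw [Finset.mem_filter] at hi₀
    simp [Setting.fiberTrace, hi₀.2.1, hx]
  rw [← S.mu_count i₀ q ⟨x, hxi₀⟩]
  exact Finset.card_pos.mpr ⟨i₀, by simp⟩

end Setting

/-- Lemma 3.2 of the paper. Assume Hypothesis 1 (with the
Camina–Zieschang data). Then the inner structure `D₀` is a 2-`(v₀, k₀, λ₀)` design
with `λ₀ = λ/μ`: i.e. `μ ∣ λ` and any two distinct points of a class `Δ` of `Σ`
lie in exactly `λ/μ` distinct blocks of `D₀` (distinct traces `B ∩ Δ`); in
particular the alternative `k₀ = v₀ − 1` (a symmetric 1-design) does not occur. -/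
theorem statement_4 (S : Setting P ι Q G) (h : S.Hyp1) :
    S.μ ∣ S.lam ∧
    (∀ (q : Q) (x y : P), S.proj x = q → S.proj y = q → x ≠ y →
      ((univ.filter fun i : ι => x ∈ S.blk i ∧ y ∈ S.blk i).image
        fun i => S.fiberTrace i q).card = S.lam / S.μ) ∧
    S.k₀ ≠ S.v₀ - 1 := by
  obtain ⟨hprime, hdvd, _, _⟩ := h
  have hlam : 0 < S.lam := hprime.pos
  have hQ : Nonempty Q := by
    have := S.one_lt_v₁
    rw [← Fintype.card_pos_iff, S.card_classes]; omega
  obtain ⟨q⟩ := hQ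
  -- two distinct points in the fiber over q
  have hfib2 : ∃ x ∈ (univ.filter fun x : P => S.proj x = q),
      ∃ y ∈ (univ.filter fun x : P => S.proj x = q), x ≠ y := by
    apply Finset.one_lt_card.mp
    rw [S.fiber_card]; exact S.one_lt_v₀
  obtain ⟨x, hx, y, hy, hxy⟩ := hfib2
  rw [Finset.mem_filter] at hx hy
  refine ⟨?_, ?_, ?_⟩
  · exact ⟨_, ((S.key_count hlam q x y hx.2 hy.2 hxy).1).trans (Nat.mul_comm _ _)⟩
  · intro q' x' y' hx' hy' hne
    obtain ⟨hmain, hμ⟩ := S.key_count hlam q' x' y' hx' hy' hne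
    exact (Nat.div_eq_of_eq_mul_left hμ hmain).symm
  -- the symmetric 1-design case does not occur
  intro hk₀
  -- Step 1: v₀ = 3, k₀ = 2, r = 2 λ
  have hinner := S.inner_relation x
  have hv₀3 : S.v₀ = 3 ∧ S.k₀ = 2 ∧ S.r = 2 * S.lam := by
    obtain ⟨m, hm⟩ := hdvd
    have hv₀ : 3 ≤ S.v₀ := by have := S.two_le_k₀; omega
    rw [hk₀, hm] at hinner
    -- (v₀-1) λ = λ m (v₀ - 2)
    have h1 : S.v₀ - 1 = m * (S.v₀ - 2) := by
      have hmul : (S.v₀ - 1) * S.lam = (m * (S.v₀ - 2)) * S.lam := by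
        rw [hinner, show S.v₀ - 1 - 1 = S.v₀ - 2 by omega]; ring
      exact Nat.eq_of_mul_eq_mul_right hlam hmul
    have hd : (S.v₀ - 2) ∣ 1 := by
      have h2 : (S.v₀ - 2) ∣ (S.v₀ - 1) := Dvd.intro_left m h1.symm
      have h3 : (S.v₀ - 2) ∣ (S.v₀ - 2) := dvd_rfl
      have := Nat.dvd_sub h2 h3
      simpa [show S.v₀ - 1 - (S.v₀ - 2) = 1 by omega] using this
    have hv3 : S.v₀ = 3 := by have := Nat.le_of_dvd one_pos hd; omega
    have hm2 : m = 2 := by rw [hv3] at h1; omega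
    exact ⟨hv3, by omega, by rw [hm, hm2]; ring⟩
  obtain ⟨hv₀3, hk₀2, hr2⟩ := hv₀3
  -- Step 2: parity forces λ = 2
  obtain ⟨q', hq'⟩ := Fintype.exists_ne_of_one_lt_card (by rw [S.card_classes]; exact S.one_lt_v₁) q
  set W : Finset P := univ.filter fun z : P => S.proj z = q' with hWdef
  have hxW : x ∉ W := by simp [hWdef, hx.2, hq'.symm]
  have hpar := S.double_count x W hxW
  have hWcard : W.card = 3 := by rw [hWdef, S.fiber_card, hv₀3]
  have heven : 2 ∣ 3 * S.lam := by
    rw [hWcard] at hpar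
    rw [hpar]
    refine Finset.dvd_sum fun i hi => ?_
    have hset : S.blk i ∩ W = (S.blk i).filter fun z => S.proj z = q' := by
      ext z; simp [hWdef, Finset.mem_inter]
    rw [hset]
    rcases S.blk_fiber_card i q' with hc | hc <;> rw [hc]
    · exact dvd_zero 2
    · rw [hk₀2]
  have h2dvd : 2 ∣ S.lam := by
    rcases Nat.prime_two.dvd_mul.mp heven with h | h
    · omega
    · exact h
  have hlam2 : S.lam = 2 :=
    ((Nat.prime_dvd_prime_iff_eq Nat.prime_two hprime).mp h2dvd).symm
  -- Step 3: r = 4, v = 2k - 1, b k = 4 v, v = 3 v₁; contradiction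
  have hr4 : S.r = 4 := by omega
  have hglob := S.global_relation x
  rw [hlam2, hr4] at hglob
  have hkv : 2 < S.k ∧ S.k < S.v := ⟨S.two_lt_k, S.k_lt_v⟩
  have hv2k : S.v = 2 * S.k - 1 := by omega
  have hflag := S.flag_count
  have hpt := S.point_count
  rw [hv₀3] at hpt
  -- k ∣ 4
  have hbk : S.b * S.k = S.v * 4 := by rw [hflag, hr4]
  have hk4 : S.k ∣ 4 := by
    have h1 : S.k ∣ S.b * S.k := dvd_mul_left S.k S.b
    have h2 : S.k ∣ 8 * S.k := dvd_mul_left S.k 8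
    have h3 := Nat.dvd_sub h2 h1
    have h4 : 8 * S.k - S.b * S.k = 4 := by omega
    rwa [h4] at h3
  have hk_le : S.k ≤ 4 := Nat.le_of_dvd (by norm_num) hk4
  have hk34 : S.k = 3 ∨ S.k = 4 := by omega
  rcases hk34 with h3 | h4
  · rw [h3] at hk4; norm_num at hk4
  · omega

end FlagTransitivePaper
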